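/- Let r1, r2, r3 > 0 be real numbers, let k1, k2 ∈ ℝ² be linearly independent vectors, let α1, α2 ∈ ℚ, and set k3 = α1 k1 + α2 k2. Let a ∈ ℝ and ω1, ω2, ω3, ω1', ω2', ω3' ∈ ℝ, and define V1(x) = a + r1 cos(2π k1·x + ω1) + r2 cos(2π k2·x + ω2) + r3 cos(2π k3·x + ω3) and V2(x) = a + r1 cos(2π k1·x + ω1') + r2 cos(2π k2·x + ω2') + r3 cos(2π k3·x + ω3') for x ∈ ℝ². If sup over x ∈ ℝ² of V1(x) equals sup over x ∈ ℝ² of V2(x), then there exists x0 ∈ ℝ² such that either V1(x) = V2(x + x0) for all x ∈ ℝ², or V1(x) = V2(−x + x0) for all x ∈ ℝ². -/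

import Mathlib

noncomputable section

open Real

/-- Euclidean dot product of two planar vectors. -/
def dot (u v : ℝ × ℝ) : ℝ := u.1 * v.1 + u.2 * v.2

namespace Stmt9Aux

lemma cos_rep (θ : ℝ) : ∃ (u ε : ℝ) (n : ℤ),
    0 ≤ u ∧ u ≤ π ∧ (ε = 1 ∨ ε = -1) ∧ θ = ε * u + n * (2 * π) ∧ Real.cos θ = Real.cos u := by
  have h2π : (0:ℝ) < 2 * π := by positivity
  set v := toIocMod h2π (-π) θ with hv
  have hmem : v ∈ Set.Ioc (-π) (-π + 2 * π) := toIocMod_mem_Ioc h2π (-π) θ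
  have hv1 : -π < v := hmem.1
  have hv2 : v ≤ π := by have := hmem.2; linarith
  have hsub : θ - v = (toIocDiv h2π (-π) θ) • (2 * π) := self_sub_toIocMod h2π (-π) θ
  set n := toIocDiv h2π (-π) θ with hn
  have hθ : θ = v + (n : ℝ) * (2 * π) := by
    have : θ - v = (n : ℝ) * (2 * π) := by rw [hsub]; simp [zsmul_eq_mul]
    linarith
  have hcos : Real.cos θ = Real.cos v := by rw [hθ, Real.cos_add_int_mul_two_pi]
  rcases le_or_gt 0 v with h0 | h0
  · exact ⟨v, 1, n, h0, hv2, Or.inl rfl, by linarith, hcos⟩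
  · refine ⟨-v, -1, n, by linarith, by linarith, Or.inr rfl, by ring_nf; linarith, ?_⟩
    rw [hcos, ← Real.cos_neg v]

/-- sup over a surjective reparametrization. -/

lemma iSup_comp_surj {α β : Type*} [Nonempty β] (f : α → ℝ) (φ : β → α) (hφ : Function.Surjective φ) :
    (⨆ x, f (φ x)) = ⨆ y, f y := by
  have h : Set.range (f ∘ φ) = Set.range f := hφ.range_comp f
  simp only [iSup]
  rw [← h]; rfl

variable (r1 r2 r3 a1 a2 : ℝ)

def hf (ψ : ℝ) (s : ℝ × ℝ) : ℝ :=
  r1 * Real.cos s.1 + r2 * Real.cos s.2 + r3 * Real.cos (a1 * s.1 + a2 * s.2 + ψ)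

def S (ψ : ℝ) : ℝ := ⨆ s : ℝ × ℝ, hf r1 r2 r3 a1 a2 ψ s

variable {r1 r2 r3}

lemma hf_le (h1 : 0 ≤ r1) (h2 : 0 ≤ r2) (h3 : 0 ≤ r3) (ψ : ℝ) (s : ℝ × ℝ) :
    hf r1 r2 r3 a1 a2 ψ s ≤ r1 + r2 + r3 := by
  unfold hf
  have c1 := Real.cos_le_one s.1
  have c2 := Real.cos_le_one s.2
  have c3 := Real.cos_le_one (a1 * s.1 + a2 * s.2 + ψ)
  nlinarith

lemma hf_bdd (h1 : 0 ≤ r1) (h2 : 0 ≤ r2) (h3 : 0 ≤ r3) (ψ : ℝ) :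
    BddAbove (Set.range (hf r1 r2 r3 a1 a2 ψ)) := by
  refine ⟨r1 + r2 + r3, ?_⟩
  rintro y ⟨s, rfl⟩
  exact hf_le a1 a2 h1 h2 h3 ψ s

lemma le_S (h1 : 0 ≤ r1) (h2 : 0 ≤ r2) (h3 : 0 ≤ r3) (ψ : ℝ) (s : ℝ × ℝ) :
    hf r1 r2 r3 a1 a2 ψ s ≤ S r1 r2 r3 a1 a2 ψ :=
  le_ciSup (hf_bdd a1 a2 h1 h2 h3 ψ) s

lemma S_neg (ψ : ℝ) : S r1 r2 r3 a1 a2 (-ψ) = S r1 r2 r3 a1 a2 ψ := by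
  unfold S
  rw [← iSup_comp_surj (hf r1 r2 r3 a1 a2 (-ψ)) (fun s : ℝ × ℝ => -s) neg_surjective]
  apply iSup_congr
  intro s
  unfold hf
  simp only [Prod.fst_neg, Prod.snd_neg]
  rw [show a1 * (-s.1) + a2 * (-s.2) + -ψ = -(a1 * s.1 + a2 * s.2 + ψ) by ring,
    Real.cos_neg, Real.cos_neg, Real.cos_neg]

lemma S_shift (ψ : ℝ) (m1 m2 c : ℤ) :
    S r1 r2 r3 a1 a2 (ψ + 2 * π * ((c : ℝ) + a1 * m1 + a2 * m2)) = S r1 r2 r3 a1 a2 ψ := by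
  unfold S
  set ψ' := ψ + 2 * π * ((c : ℝ) + a1 * m1 + a2 * m2)
  have hsurj : Function.Surjective (fun s : ℝ × ℝ => (s.1 - 2 * π * m1, s.2 - 2 * π * m2)) := by
    intro y; exact ⟨(y.1 + 2 * π * m1, y.2 + 2 * π * m2), by simp⟩
  rw [← iSup_comp_surj (hf r1 r2 r3 a1 a2 ψ') _ hsurj]
  apply iSup_congr
  intro s
  unfold hf
  simp only
  have e1 : Real.cos (s.1 - 2 * π * m1) = Real.cos s.1 := by
    rw [show s.1 - 2 * π * m1 = s.1 + (-m1 : ℤ) * (2 * π) by push_cast; ring,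
      Real.cos_add_int_mul_two_pi]
  have e2 : Real.cos (s.2 - 2 * π * m2) = Real.cos s.2 := by
    rw [show s.2 - 2 * π * m2 = s.2 + (-m2 : ℤ) * (2 * π) by push_cast; ring,
      Real.cos_add_int_mul_two_pi]
  have e3 : a1 * (s.1 - 2 * π * m1) + a2 * (s.2 - 2 * π * m2) + ψ'
      = (a1 * s.1 + a2 * s.2 + ψ) + (c : ℝ) * (2 * π) := by
    simp only [ψ']; ring
  rw [e1, e2, e3, Real.cos_add_int_mul_two_pi]

lemma hf_exists_max (r1 r2 r3 a1 a2 : ℝ) (q : ℕ) (hq : 0 < q) (n1 n2 : ℤ)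
    (h1 : a1 * q = n1) (h2 : a2 * q = n2) (ψ : ℝ) :
    ∃ s0, ∀ s, hf r1 r2 r3 a1 a2 ψ s ≤ hf r1 r2 r3 a1 a2 ψ s0 := by
  have hQ : (0:ℝ) < 2 * π * q := by positivity
  have hcont : Continuous (hf r1 r2 r3 a1 a2 ψ) := by
    unfold hf; fun_prop
  have hKc : IsCompact (Set.Icc (0:ℝ) (2 * π * q) ×ˢ Set.Icc (0:ℝ) (2 * π * q)) :=
    isCompact_Icc.prod isCompact_Icc
  have hKne : (Set.Icc (0:ℝ) (2 * π * q) ×ˢ Set.Icc (0:ℝ) (2 * π * q)).Nonempty :=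
    ⟨(0, 0), by constructor <;> exact ⟨le_refl 0, le_of_lt hQ⟩⟩
  obtain ⟨s0, _, hmax⟩ := hKc.exists_isMaxOn hKne hcont.continuousOn
  refine ⟨s0, fun s => ?_⟩
  -- reduce s into the fundamental square
  set Q := 2 * π * q with hQdef
  set m1 : ℤ := ⌊s.1 / Q⌋
  set m2 : ℤ := ⌊s.2 / Q⌋
  set c1 : ℝ := s.1 - Q * m1 with hc1
  set c2 : ℝ := s.2 - Q * m2 with hc2
  have hfr1 : 0 ≤ c1 ∧ c1 < Q := by
    have ha := (le_div_iff₀ hQ).mp (Int.floor_le (s.1 / Q))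
    have hb := (div_lt_iff₀ hQ).mp (Int.lt_floor_add_one (s.1 / Q))
    constructor
    · rw [hc1]; linarith
    · rw [hc1]; nlinarith
  have hfr2 : 0 ≤ c2 ∧ c2 < Q := by
    have ha := (le_div_iff₀ hQ).mp (Int.floor_le (s.2 / Q))
    have hb := (div_lt_iff₀ hQ).mp (Int.lt_floor_add_one (s.2 / Q))
    constructor
    · rw [hc2]; linarith
    · rw [hc2]; nlinarith
  have hmem : (c1, c2) ∈ Set.Icc (0:ℝ) Q ×ˢ Set.Icc (0:ℝ) Q :=
    ⟨⟨hfr1.1, le_of_lt hfr1.2⟩, ⟨hfr2.1, le_of_lt hfr2.2⟩⟩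
  have hper : hf r1 r2 r3 a1 a2 ψ s = hf r1 r2 r3 a1 a2 ψ (c1, c2) := by
    unfold hf
    simp only
    have e1 : Real.cos s.1 = Real.cos c1 := by
      rw [show s.1 = c1 + ((q : ℤ) * m1 : ℤ) * (2 * π) by rw [hc1]; push_cast; ring,
        Real.cos_add_int_mul_two_pi]
    have e2 : Real.cos s.2 = Real.cos c2 := by
      rw [show s.2 = c2 + ((q : ℤ) * m2 : ℤ) * (2 * π) by rw [hc2]; push_cast; ring,
        Real.cos_add_int_mul_two_pi]
    have e3 : a1 * s.1 + a2 * s.2 + ψ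
        = (a1 * c1 + a2 * c2 + ψ) + ((n1 * m1 + n2 * m2 : ℤ) : ℝ) * (2 * π) := by
      rw [hc1, hc2]; push_cast
      linear_combination (2 * π * (m1 : ℝ)) * h1 + (2 * π * (m2 : ℝ)) * h2
    rw [e1, e2, e3, Real.cos_add_int_mul_two_pi]
  rw [hper]
  exact hmax hmem

lemma S_strict_anti {r1 r2 r3 : ℝ} (a1 a2 : ℝ) (hr1 : 0 < r1) (hr2 : 0 < r2) (hr3 : 0 < r3)
    (q : ℕ) (hq : 0 < q) (n1 n2 : ℤ) (h1 : a1 * q = n1) (h2 : a2 * q = n2)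
    (γ : ℝ) (hγ : 0 < γ)
    (hmem : ∀ m1 m2 c : ℤ, ∃ k : ℤ, 2 * π * ((c : ℝ) + a1 * m1 + a2 * m2) = k * γ)
    (ψ' ψ : ℝ) (hψ'0 : 0 ≤ ψ') (hlt : ψ' < ψ) (hψγ : ψ ≤ γ / 2) :
    S r1 r2 r3 a1 a2 ψ < S r1 r2 r3 a1 a2 ψ' := by
  obtain ⟨s0, hmax⟩ := hf_exists_max r1 r2 r3 a1 a2 q hq n1 n2 h1 h2 ψ
  obtain ⟨u1, ε1, m1, hu1a, hu1b, hε1, hrep1, hcos1⟩ := cos_rep s0.1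
  obtain ⟨u2, ε2, m2, hu2a, hu2b, hε2, hrep2, hcos2⟩ := cos_rep s0.2
  obtain ⟨w, ε3, m3, hwa, hwb, hε3, hrep3, hcos3⟩ := cos_rep (a1 * s0.1 + a2 * s0.2 + ψ)
  obtain ⟨k, hk⟩ := hmem (-m1) (-m2) m3
  -- ψ = ε3*w - a1*(ε1*u1) - a2*(ε2*u2) + k*γ
  have hψeq : ψ = ε3 * w - a1 * (ε1 * u1) - a2 * (ε2 * u2) + k * γ := by
    push_cast at hk
    linear_combination hrep3 - a1 * hrep1 - a2 * hrep2 + hk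
  have habs1 : |ε1| = 1 := by rcases hε1 with h | h <;> simp [h]
  have habs2 : |ε2| = 1 := by rcases hε2 with h | h <;> simp [h]
  have habs3 : |ε3| = 1 := by rcases hε3 with h | h <;> simp [h]
  set T : ℝ := |a1| * u1 + |a2| * u2 + w with hT
  have hTE : |ε3 * w - a1 * (ε1 * u1) - a2 * (ε2 * u2)| ≤ T := by
    have b1 : |a1 * (ε1 * u1)| = |a1| * u1 := by
      rw [abs_mul, abs_mul, habs1, one_mul, abs_of_nonneg hu1a]
    have b2 : |a2 * (ε2 * u2)| = |a2| * u2 := by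
      rw [abs_mul, abs_mul, habs2, one_mul, abs_of_nonneg hu2a]
    have b3 : |ε3 * w| = w := by rw [abs_mul, habs3, one_mul, abs_of_nonneg hwa]
    calc |ε3 * w - a1 * (ε1 * u1) - a2 * (ε2 * u2)|
        ≤ |ε3 * w| + |a1 * (ε1 * u1)| + |a2 * (ε2 * u2)| := by
          exact (abs_sub _ _).trans (by gcongr; exact abs_sub _ _)
      _ = T := by rw [b1, b2, b3, hT]; ring
  have hψpos : 0 < ψ := lt_of_le_of_lt hψ'0 hlt
  have hψT : ψ ≤ T := by
    rcases eq_or_ne k 0 with hk0 | hk0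
    · rw [hk0] at hψeq; push_cast at hψeq
      calc ψ = ε3 * w - a1 * (ε1 * u1) - a2 * (ε2 * u2) := by linarith [hψeq]
        _ ≤ |ε3 * w - a1 * (ε1 * u1) - a2 * (ε2 * u2)| := le_abs_self _
        _ ≤ T := hTE
    · have hk1 : (1:ℝ) ≤ |(k:ℝ)| := by
        have := Int.one_le_abs hk0
        calc (1:ℝ) = ((1:ℤ):ℝ) := by norm_num
          _ ≤ ((|k|:ℤ):ℝ) := by exact_mod_cast this
          _ = |(k:ℝ)| := by push_cast; rfl
      have : γ ≤ |(k:ℝ) * γ| := by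
        calc γ = 1 * γ := (one_mul γ).symm
          _ ≤ |(k:ℝ)| * γ := mul_le_mul_of_nonneg_right hk1 hγ.le
          _ = |(k:ℝ) * γ| := by rw [abs_mul, abs_of_pos hγ]
      have h2 : |(k:ℝ) * γ| ≤ ψ + T := by
        have : (k:ℝ) * γ = ψ - (ε3 * w - a1 * (ε1 * u1) - a2 * (ε2 * u2)) := by linarith [hψeq]
        rw [this]
        calc |ψ - (ε3 * w - a1 * (ε1 * u1) - a2 * (ε2 * u2))|
            ≤ |ψ| + |ε3 * w - a1 * (ε1 * u1) - a2 * (ε2 * u2)| := abs_sub _ _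
          _ ≤ ψ + T := by rw [abs_of_pos hψpos]; linarith [hTE]
      linarith
  have hT0 : 0 < T := lt_of_lt_of_le hψpos hψT
  -- not all of u1 u2 w are zero
  have hnz : ¬ (u1 = 0 ∧ u2 = 0 ∧ w = 0) := by
    rintro ⟨e1, e2, e3⟩
    rw [e1, e2, e3] at hψeq
    simp at hψeq
    -- ψ = k * γ with 0 < ψ ≤ γ/2 < γ : contradiction
    rcases le_or_gt (k:ℝ) 0 with h | h
    · have : (k:ℝ) * γ ≤ 0 := mul_nonpos_of_nonpos_of_nonneg h hγ.le
      linarith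
    · have hk1 : (1:ℤ) ≤ k := by exact_mod_cast h
      have h1' : (1:ℝ) ≤ (k:ℝ) := by exact_mod_cast hk1
      have : γ ≤ (k:ℝ) * γ := le_mul_of_one_le_left hγ.le h1'
      linarith
  set t : ℝ := ψ' / T with ht
  have ht0 : 0 ≤ t := div_nonneg hψ'0 (le_of_lt hT0)
  have ht1 : t < 1 := (div_lt_one hT0).mpr (lt_of_lt_of_le hlt hψT)
  have htT : t * T = ψ' := by rw [ht]; exact div_mul_cancel₀ ψ' (ne_of_gt hT0)
  set σ1 : ℝ := if 0 ≤ a1 then -1 else 1 with hσ1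
  set σ2 : ℝ := if 0 ≤ a2 then -1 else 1 with hσ2
  have hσ1e : a1 * σ1 = -|a1| := by
    rw [hσ1]; split_ifs with h
    · rw [abs_of_nonneg h]; ring
    · rw [abs_of_neg (lt_of_not_ge h)]; ring
  have hσ2e : a2 * σ2 = -|a2| := by
    rw [hσ2]; split_ifs with h
    · rw [abs_of_nonneg h]; ring
    · rw [abs_of_neg (lt_of_not_ge h)]; ring
  have habsσ1 : |σ1| = 1 := by rw [hσ1]; split_ifs <;> simp
  have habsσ2 : |σ2| = 1 := by rw [hσ2]; split_ifs <;> simp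
  set s' : ℝ × ℝ := (σ1 * (t * u1), σ2 * (t * u2)) with hs'
  have hphase : a1 * s'.1 + a2 * s'.2 + ψ' = t * w := by
    rw [hs']
    simp only
    have : a1 * (σ1 * (t * u1)) + a2 * (σ2 * (t * u2)) + ψ'
        = -|a1| * (t * u1) - |a2| * (t * u2) + t * T := by
      rw [← htT]; linear_combination (t * u1) * hσ1e + (t * u2) * hσ2e
    rw [this, hT]; ring
  have hcs1 : Real.cos s'.1 = Real.cos (t * u1) := by
    rw [hs']; simp only
    rcases (by rw [hσ1]; split_ifs <;> simp : σ1 = 1 ∨ σ1 = -1) with h | h <;> rw [h]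
    · ring_nf
    · rw [show (-1 : ℝ) * (t * u1) = -(t * u1) by ring, Real.cos_neg]
  have hcs2 : Real.cos s'.2 = Real.cos (t * u2) := by
    rw [hs']; simp only
    rcases (by rw [hσ2]; split_ifs <;> simp : σ2 = 1 ∨ σ2 = -1) with h | h <;> rw [h]
    · ring_nf
    · rw [show (-1 : ℝ) * (t * u2) = -(t * u2) by ring, Real.cos_neg]
  -- value at the maximizer
  have hval : hf r1 r2 r3 a1 a2 ψ s0 = r1 * Real.cos u1 + r2 * Real.cos u2 + r3 * Real.cos w := by
    unfold hf; rw [hcos1, hcos2, hcos3]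
  have hval' : hf r1 r2 r3 a1 a2 ψ' s' =
      r1 * Real.cos (t * u1) + r2 * Real.cos (t * u2) + r3 * Real.cos (t * w) := by
    unfold hf; rw [hcs1, hcs2, hphase]
  -- cosine comparisons
  have hc1 : Real.cos u1 ≤ Real.cos (t * u1) :=
    Real.cos_le_cos_of_nonneg_of_le_pi (by positivity) hu1b
      (mul_le_of_le_one_left hu1a ht1.le)
  have hc2 : Real.cos u2 ≤ Real.cos (t * u2) :=
    Real.cos_le_cos_of_nonneg_of_le_pi (by positivity) hu2b
      (mul_le_of_le_one_left hu2a ht1.le)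
  have hc3 : Real.cos w ≤ Real.cos (t * w) :=
    Real.cos_le_cos_of_nonneg_of_le_pi (by positivity) hwb
      (mul_le_of_le_one_left hwa ht1.le)
  have hstrict : r1 * Real.cos u1 + r2 * Real.cos u2 + r3 * Real.cos w
      < r1 * Real.cos (t * u1) + r2 * Real.cos (t * u2) + r3 * Real.cos (t * w) := by
    have key : ∀ u : ℝ, 0 ≤ u → u ≤ π → u ≠ 0 → Real.cos u < Real.cos (t * u) := by
      intro u hu0 huπ hune
      have hu0' : 0 < u := lt_of_le_of_ne hu0 (Ne.symm hune)
      exact Real.cos_lt_cos_of_nonneg_of_le_pi (by positivity) huπ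
        (mul_lt_of_lt_one_left hu0' ht1)
    have m1' := mul_le_mul_of_nonneg_left hc1 hr1.le
    have m2' := mul_le_mul_of_nonneg_left hc2 hr2.le
    have m3' := mul_le_mul_of_nonneg_left hc3 hr3.le
    rcases not_and_or.mp hnz with h | h'
    · have := mul_lt_mul_of_pos_left (key u1 hu1a hu1b h) hr1
      linarith
    · rcases not_and_or.mp h' with h | h
      · have := mul_lt_mul_of_pos_left (key u2 hu2a hu2b h) hr2
        linarith
      · have := mul_lt_mul_of_pos_left (key w hwa hwb h) hr3
        linarith
  have hS1 : S r1 r2 r3 a1 a2 ψ ≤ hf r1 r2 r3 a1 a2 ψ s0 := ciSup_le hmax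
  have hS2 : hf r1 r2 r3 a1 a2 ψ' s' ≤ S r1 r2 r3 a1 a2 ψ' :=
    le_S a1 a2 (le_of_lt hr1) (le_of_lt hr2) (le_of_lt hr3) ψ' s'
  calc S r1 r2 r3 a1 a2 ψ ≤ hf r1 r2 r3 a1 a2 ψ s0 := hS1
    _ < hf r1 r2 r3 a1 a2 ψ' s' := by rw [hval, hval']; exact hstrict
    _ ≤ S r1 r2 r3 a1 a2 ψ' := hS2

lemma S_classify {r1 r2 r3 : ℝ} (a1 a2 : ℝ) (hr1 : 0 < r1) (hr2 : 0 < r2) (hr3 : 0 < r3)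
    (q : ℕ) (hq : 0 < q) (n1 n2 : ℤ) (h1 : a1 * q = n1) (h2 : a2 * q = n2)
    (γ : ℝ) (hγ : 0 < γ)
    (hmem : ∀ m1 m2 c : ℤ, ∃ k : ℤ, 2 * π * ((c : ℝ) + a1 * m1 + a2 * m2) = k * γ)
    (hγrep : ∀ k : ℤ, ∃ m1 m2 c : ℤ, (k : ℝ) * γ = 2 * π * ((c : ℝ) + a1 * m1 + a2 * m2))
    (χ1 χ2 : ℝ) (hS : S r1 r2 r3 a1 a2 χ1 = S r1 r2 r3 a1 a2 χ2) :
    ∃ k : ℤ, χ1 - χ2 = k * γ ∨ χ1 + χ2 = k * γ := by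
  have canon : ∀ χ : ℝ, ∃ (c ε : ℝ) (k : ℤ), 0 ≤ c ∧ c ≤ γ / 2 ∧ (ε = 1 ∨ ε = -1) ∧
      χ = ε * c + k * γ ∧ S r1 r2 r3 a1 a2 χ = S r1 r2 r3 a1 a2 c := by
    intro χ
    set m := round (χ / γ) with hm
    have habs : |χ / γ - m| ≤ 1 / 2 := abs_sub_round _
    set δ := χ - m * γ with hδ
    have hδabs : |δ| ≤ γ / 2 := by
      have h0 : |χ / γ - m| * γ ≤ (1 / 2) * γ := mul_le_mul_of_nonneg_right habs hγ.le
      have hmul : (χ / γ - m) * γ = δ := by rw [hδ]; field_simp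
      have h1' : |χ / γ - m| * γ = |δ| := by
        rw [← hmul, abs_mul, abs_of_pos hγ]
      linarith [h1' ▸ h0]
    have hshift : S r1 r2 r3 a1 a2 χ = S r1 r2 r3 a1 a2 δ := by
      obtain ⟨m1, m2, c, hcrep⟩ := hγrep m
      have hχδ : χ = δ + 2 * π * ((c : ℝ) + a1 * m1 + a2 * m2) := by
        rw [hδ, ← hcrep]; ring
      rw [hχδ, S_shift]
    rcases le_or_gt 0 δ with h | h
    · exact ⟨δ, 1, m, h, by rw [abs_of_nonneg h] at hδabs; linarith, Or.inl rfl, by ring, hshift⟩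
    · refine ⟨-δ, -1, m, by linarith, by rw [abs_of_neg h] at hδabs; linarith, Or.inr rfl,
        by ring, ?_⟩
      rw [hshift, ← S_neg a1 a2 (-δ), neg_neg]
  obtain ⟨c1, e1, k1, hc10, hc1γ, he1, hχ1, hS1⟩ := canon χ1
  obtain ⟨c2, e2, k2, hc20, hc2γ, he2, hχ2, hS2⟩ := canon χ2
  have hSc : S r1 r2 r3 a1 a2 c1 = S r1 r2 r3 a1 a2 c2 := by rw [← hS1, ← hS2, hS]
  have hc : c1 = c2 := by
    by_contra hne
    rcases lt_or_gt_of_ne hne with hlt | hlt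
    · have := S_strict_anti a1 a2 hr1 hr2 hr3 q hq n1 n2 h1 h2 γ hγ hmem c1 c2 hc10 hlt hc2γ
      linarith
    · have := S_strict_anti a1 a2 hr1 hr2 hr3 q hq n1 n2 h1 h2 γ hγ hmem c2 c1 hc20 hlt hc1γ
      linarith
  subst hc
  rcases he1 with rfl | rfl <;> rcases he2 with rfl | rfl
  · exact ⟨k1 - k2, Or.inl (by push_cast; linarith [hχ1, hχ2])⟩
  · exact ⟨k1 + k2, Or.inr (by push_cast; linarith [hχ1, hχ2])⟩
  · exact ⟨k1 + k2, Or.inr (by push_cast; linarith [hχ1, hχ2])⟩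
  · exact ⟨k1 - k2, Or.inl (by push_cast; linarith [hχ1, hχ2])⟩

end Stmt9Aux

open Stmt9Aux

theorem stmt9 (r1 r2 r3 : ℝ) (hr1 : 0 < r1) (hr2 : 0 < r2) (hr3 : 0 < r3)
    (k1 k2 : ℝ × ℝ) (hk : LinearIndependent ℝ ![k1, k2])
    (α1 α2 : ℚ) (k3 : ℝ × ℝ) (hk3 : k3 = (α1 : ℝ) • k1 + (α2 : ℝ) • k2)
    (a : ℝ) (ω1 ω2 ω3 ω1' ω2' ω3' : ℝ)
    (V1 V2 : ℝ × ℝ → ℝ)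
    (hV1 : ∀ x, V1 x = a + r1 * cos (2 * π * dot k1 x + ω1)
      + r2 * cos (2 * π * dot k2 x + ω2) + r3 * cos (2 * π * dot k3 x + ω3))
    (hV2 : ∀ x, V2 x = a + r1 * cos (2 * π * dot k1 x + ω1')
      + r2 * cos (2 * π * dot k2 x + ω2') + r3 * cos (2 * π * dot k3 x + ω3'))
    (hsup : (⨆ x : ℝ × ℝ, V1 x) = ⨆ x : ℝ × ℝ, V2 x) :
    ∃ x0 : ℝ × ℝ, (∀ x : ℝ × ℝ, V1 x = V2 (x + x0)) ∨
      (∀ x : ℝ × ℝ, V1 x = V2 (-x + x0)) := by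
  have hπ : π ≠ 0 := Real.pi_ne_zero
  set a1 : ℝ := (α1 : ℝ) with ha1def
  set a2 : ℝ := (α2 : ℝ) with ha2def
  -- linearity of dot
  have hdotadd : ∀ (u x y : ℝ × ℝ), dot u (x + y) = dot u x + dot u y := by
    intro u x y
    simp only [dot, Prod.fst_add, Prod.snd_add]
    ring
  have hdotneg : ∀ (u x : ℝ × ℝ), dot u (-x) = -dot u x := by
    intro u x
    simp only [dot, Prod.fst_neg, Prod.snd_neg]
    ring
  have hdot3 : ∀ x, dot k3 x = a1 * dot k1 x + a2 * dot k2 x := by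
    intro x
    rw [hk3]
    simp only [dot, Prod.fst_add, Prod.snd_add, Prod.smul_fst, Prod.smul_snd, smul_eq_mul]
    ring
  -- surjectivity from linear independence
  have hdet : k1.1 * k2.2 - k1.2 * k2.1 ≠ 0 := by
    intro hd
    rw [LinearIndependent.pair_iff] at hk
    have e1 : k2.2 • k1 + (-k1.2) • k2 = (0 : ℝ × ℝ) := by
      have : k2.2 • k1 + (-k1.2) • k2 =
          (k2.2 * k1.1 + (-k1.2) * k2.1, k2.2 * k1.2 + (-k1.2) * k2.2) := rfl
      rw [this, Prod.mk_eq_zero]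
      exact ⟨by linear_combination hd, by ring⟩
    have e2 : k2.1 • k1 + (-k1.1) • k2 = (0 : ℝ × ℝ) := by
      have : k2.1 • k1 + (-k1.1) • k2 =
          (k2.1 * k1.1 + (-k1.1) * k2.1, k2.1 * k1.2 + (-k1.1) * k2.2) := rfl
      rw [this, Prod.mk_eq_zero]
      exact ⟨by ring, by linear_combination -hd⟩
    obtain ⟨h11, h12⟩ := hk _ _ e1
    obtain ⟨h21, h22⟩ := hk _ _ e2
    have hk10 : k1 = 0 := by
      have : k1 = (k1.1, k1.2) := rfl
      rw [this, Prod.mk_eq_zero]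
      exact ⟨neg_eq_zero.mp h22, neg_eq_zero.mp h12⟩
    have := hk 1 0 (by rw [hk10]; simp)
    exact one_ne_zero this.1
  have hsurjdot : ∀ t1 t2 : ℝ, ∃ x : ℝ × ℝ, dot k1 x = t1 ∧ dot k2 x = t2 := by
    intro t1 t2
    set D := k1.1 * k2.2 - k1.2 * k2.1
    refine ⟨((k2.2 * t1 - k1.2 * t2) / D, (k1.1 * t2 - k2.1 * t1) / D), ?_, ?_⟩ <;>
      · simp only [dot]
        field_simp
        ring
  -- number theory setup
  set qn : ℕ := α1.den * α2.den with hqn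
  have hq0 : 0 < qn := Nat.mul_pos α1.pos α2.pos
  set p1 : ℤ := α1.num * α2.den with hp1
  set p2 : ℤ := α2.num * α1.den with hp2
  have hden1 : ((α1.den : ℝ)) ≠ 0 := Nat.cast_ne_zero.mpr α1.den_nz
  have hden2 : ((α2.den : ℝ)) ≠ 0 := Nat.cast_ne_zero.mpr α2.den_nz
  have hqR : ((qn : ℝ)) ≠ 0 := Nat.cast_ne_zero.mpr hq0.ne'
  have ha1q : a1 * qn = (p1 : ℝ) := by
    rw [ha1def, hqn, hp1, Rat.cast_def]
    push_cast
    field_simp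
  have ha2q : a2 * qn = (p2 : ℝ) := by
    rw [ha2def, hqn, hp2, Rat.cast_def]
    push_cast
    field_simp
  set g : ℕ := Int.gcd p1 p2 with hg
  set d : ℕ := Int.gcd (qn : ℤ) (g : ℤ) with hd
  have hd0 : 0 < d := by
    apply Int.gcd_pos_of_ne_zero_left
    exact_mod_cast hq0.ne'
  set γ : ℝ := 2 * π * d / qn with hγdef
  have hdR : (0:ℝ) < d := by exact_mod_cast hd0
  have hqRpos : (0:ℝ) < qn := by exact_mod_cast hq0
  have hγ0 : 0 < γ := by
    rw [hγdef]
    apply div_pos _ hqRpos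
    positivity
  have hdq : (d : ℤ) ∣ (qn : ℤ) := Int.gcd_dvd_left _ _
  have hdg : (d : ℤ) ∣ (g : ℤ) := Int.gcd_dvd_right _ _
  have hdp1 : (d : ℤ) ∣ p1 := hdg.trans (Int.gcd_dvd_left _ _)
  have hdp2 : (d : ℤ) ∣ p2 := hdg.trans (Int.gcd_dvd_right _ _)
  obtain ⟨x, y, z, hbez⟩ : ∃ x y z : ℤ, (d : ℤ) = qn * x + p1 * y + p2 * z := by
    have b1 := Int.gcd_eq_gcd_ab (qn : ℤ) (g : ℤ)
    have b2 := Int.gcd_eq_gcd_ab p1 p2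
    refine ⟨Int.gcdA (qn : ℤ) (g : ℤ), Int.gcdA p1 p2 * Int.gcdB (qn : ℤ) (g : ℤ),
      Int.gcdB p1 p2 * Int.gcdB (qn : ℤ) (g : ℤ), ?_⟩
    rw [← hd] at b1
    rw [← hg] at b2
    linear_combination b1 + Int.gcdB (qn : ℤ) (g : ℤ) * b2
  have hbezR : (d : ℝ) = qn * x + p1 * y + p2 * z := by exact_mod_cast hbez
  have hγrep : ∀ k : ℤ, ∃ m1 m2 c : ℤ, (k : ℝ) * γ = 2 * π * ((c : ℝ) + a1 * m1 + a2 * m2) := by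
    intro k
    refine ⟨k * y, k * z, k * x, ?_⟩
    rw [hγdef]
    push_cast
    field_simp
    linear_combination ((k : ℝ)) * hbezR - ((k : ℝ) * (y : ℝ)) * ha1q
      - ((k : ℝ) * (z : ℝ)) * ha2q
  have hmem : ∀ m1 m2 c : ℤ, ∃ k : ℤ, 2 * π * ((c : ℝ) + a1 * m1 + a2 * m2) = k * γ := by
    intro m1 m2 c
    have hdvd : (d : ℤ) ∣ (c * qn + m1 * p1 + m2 * p2) :=
      dvd_add (dvd_add (hdq.mul_left c) (hdp1.mul_left m1)) (hdp2.mul_left m2)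
    obtain ⟨e, he⟩ := hdvd
    refine ⟨e, ?_⟩
    have heR : ((c : ℝ) * qn + m1 * p1 + m2 * p2) = (d : ℝ) * e := by exact_mod_cast he
    rw [hγdef]
    field_simp
    linear_combination heR + ((m1 : ℝ)) * ha1q + ((m2 : ℝ)) * ha2q
  -- suprema
  set χ1 : ℝ := ω3 - a1 * ω1 - a2 * ω2 with hχ1
  set χ2 : ℝ := ω3' - a1 * ω1' - a2 * ω2' with hχ2
  have h2π : (2 : ℝ) * π ≠ 0 := by positivity
  have hφ1surj : Function.Surjective
      (fun x : ℝ × ℝ => (2 * π * dot k1 x + ω1, 2 * π * dot k2 x + ω2)) := by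
    intro s
    obtain ⟨x, hx1, hx2⟩ := hsurjdot ((s.1 - ω1) / (2 * π)) ((s.2 - ω2) / (2 * π))
    refine ⟨x, ?_⟩
    rw [Prod.ext_iff]
    constructor <;> simp only [hx1, hx2] <;> field_simp <;> ring
  have hφ2surj : Function.Surjective
      (fun x : ℝ × ℝ => (2 * π * dot k1 x + ω1', 2 * π * dot k2 x + ω2')) := by
    intro s
    obtain ⟨x, hx1, hx2⟩ := hsurjdot ((s.1 - ω1') / (2 * π)) ((s.2 - ω2') / (2 * π))
    refine ⟨x, ?_⟩
    rw [Prod.ext_iff]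
    constructor <;> simp only [hx1, hx2] <;> field_simp <;> ring
  have hV1x : ∀ x, V1 x = a + hf r1 r2 r3 a1 a2 χ1 (2 * π * dot k1 x + ω1, 2 * π * dot k2 x + ω2) := by
    intro x
    rw [hV1 x]
    unfold hf
    simp only
    rw [show a1 * (2 * π * dot k1 x + ω1) + a2 * (2 * π * dot k2 x + ω2) + χ1
        = 2 * π * dot k3 x + ω3 by rw [hχ1, hdot3 x]; ring]
    ring
  have hV2x : ∀ x, V2 x = a + hf r1 r2 r3 a1 a2 χ2 (2 * π * dot k1 x + ω1', 2 * π * dot k2 x + ω2') := by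
    intro x
    rw [hV2 x]
    unfold hf
    simp only
    rw [show a1 * (2 * π * dot k1 x + ω1') + a2 * (2 * π * dot k2 x + ω2') + χ2
        = 2 * π * dot k3 x + ω3' by rw [hχ2, hdot3 x]; ring]
    ring
  have hbdd1 : BddAbove (Set.range (fun x : ℝ × ℝ =>
      hf r1 r2 r3 a1 a2 χ1 (2 * π * dot k1 x + ω1, 2 * π * dot k2 x + ω2))) := by
    refine ⟨r1 + r2 + r3, ?_⟩
    rintro v ⟨xx, rfl⟩
    exact hf_le a1 a2 hr1.le hr2.le hr3.le χ1 _
  have hbdd2 : BddAbove (Set.range (fun x : ℝ × ℝ =>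
      hf r1 r2 r3 a1 a2 χ2 (2 * π * dot k1 x + ω1', 2 * π * dot k2 x + ω2'))) := by
    refine ⟨r1 + r2 + r3, ?_⟩
    rintro v ⟨xx, rfl⟩
    exact hf_le a1 a2 hr1.le hr2.le hr3.le χ2 _
  have hsup1 : (⨆ x : ℝ × ℝ, V1 x) = a + S r1 r2 r3 a1 a2 χ1 := by
    unfold S
    rw [← iSup_comp_surj (hf r1 r2 r3 a1 a2 χ1) _ hφ1surj, add_ciSup hbdd1 a]
    exact iSup_congr hV1x
  have hsup2 : (⨆ x : ℝ × ℝ, V2 x) = a + S r1 r2 r3 a1 a2 χ2 := by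
    unfold S
    rw [← iSup_comp_surj (hf r1 r2 r3 a1 a2 χ2) _ hφ2surj, add_ciSup hbdd2 a]
    exact iSup_congr hV2x
  have hSeq : S r1 r2 r3 a1 a2 χ1 = S r1 r2 r3 a1 a2 χ2 := by
    rw [hsup1, hsup2] at hsup
    linarith
  obtain ⟨k, hcase⟩ := S_classify a1 a2 hr1 hr2 hr3 qn hq0 p1 p2 ha1q ha2q γ hγ0 hmem hγrep χ1 χ2 hSeq
  obtain ⟨m1, m2, c, hkrep⟩ := hγrep k
  rcases hcase with hcase | hcase
  · -- translation
    obtain ⟨x0, hx01, hx02⟩ := hsurjdot ((ω1 - ω1') / (2 * π) + m1) ((ω2 - ω2') / (2 * π) + m2)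
    refine ⟨x0, Or.inl fun x => ?_⟩
    rw [hV1 x, hV2 (x + x0)]
    have t1 : 2 * π * dot k1 (x + x0) + ω1' = (2 * π * dot k1 x + ω1) + (m1 : ℝ) * (2 * π) := by
      rw [hdotadd, hx01]
      field_simp
      ring
    have t2 : 2 * π * dot k2 (x + x0) + ω2' = (2 * π * dot k2 x + ω2) + (m2 : ℝ) * (2 * π) := by
      rw [hdotadd, hx02]
      field_simp
      ring
    have t3 : 2 * π * dot k3 (x + x0) + ω3' = (2 * π * dot k3 x + ω3) + ((-c : ℤ) : ℝ) * (2 * π) := by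
      rw [hdotadd, hdot3 x0, hx01, hx02]
      push_cast
      have hcc : χ1 - χ2 = 2 * π * ((c : ℝ) + a1 * m1 + a2 * m2) := by rw [hcase, hkrep]
      rw [hχ1, hχ2] at hcc
      field_simp
      linear_combination (-1 : ℝ) * hcc
    rw [t1, t2, t3, Real.cos_add_int_mul_two_pi, Real.cos_add_int_mul_two_pi,
      Real.cos_add_int_mul_two_pi]
  · -- reflection
    obtain ⟨x0, hx01, hx02⟩ := hsurjdot (-(ω1 + ω1') / (2 * π) - m1) (-(ω2 + ω2') / (2 * π) - m2)
    refine ⟨x0, Or.inr fun x => ?_⟩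
    rw [hV1 x, hV2 (-x + x0)]
    have t1 : 2 * π * dot k1 (-x + x0) + ω1'
        = -((2 * π * dot k1 x + ω1) + (m1 : ℝ) * (2 * π)) := by
      rw [hdotadd, hdotneg, hx01]
      field_simp
      ring
    have t2 : 2 * π * dot k2 (-x + x0) + ω2'
        = -((2 * π * dot k2 x + ω2) + (m2 : ℝ) * (2 * π)) := by
      rw [hdotadd, hdotneg, hx02]
      field_simp
      ring
    have t3 : 2 * π * dot k3 (-x + x0) + ω3'
        = -((2 * π * dot k3 x + ω3) + ((-c : ℤ) : ℝ) * (2 * π)) := by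
      rw [hdotadd, hdotneg, hdot3 x0, hx01, hx02]
      push_cast
      have hcc : χ1 + χ2 = 2 * π * ((c : ℝ) + a1 * m1 + a2 * m2) := by rw [hcase, hkrep]
      rw [hχ1, hχ2] at hcc
      field_simp
      linear_combination hcc
    rw [t1, t2, t3, Real.cos_neg, Real.cos_neg, Real.cos_neg, Real.cos_add_int_mul_two_pi,
      Real.cos_add_int_mul_two_pi, Real.cos_add_int_mul_two_pi]
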